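/- arXiv:1009.3913 — 2 statements merged into one kernel-verified Lean document; each statement's English description precedes it below -/
import Mathlib

section
/- Let H be a Hopf algebra over a field k with antipode S, and let S' : H → k-linear→ H be a linear map satisfying Σ S'(x₍₂₎)·x₍₁₎ = ε(x)·1 and Σ x₍₂₎·S'(x₍₁₎) = ε(x)·1 for all x ∈ H (i.e. S' is an antipode for the co-opposite comultiplication). Let (V, π) and (Σ, σ) be H-modules given by algebra homomorphisms π : H → End(V), σ : H → End(Σ). Suppose a finite family of elements Z_i ∈ H and operators T_i ∈ End(Σ) satisfies the invariance condition: for every x ∈ H, Σ_i (x₍₂₎ · Z_i · S'(x₍₁₎)) ⊗ (σ(x₍₃₎) ∘ T_i ∘ σ(S(x₍₄₎))) = ε(x) · Σ_i Z_i ⊗ T_i in H ⊗ End(Σ). Then the operator D = Σ_i π(Z_i) ⊗ T_i on V ⊗ Σ commutes with the operator Σ π(x₍₁₎) ⊗ σ(x₍₂₎) for every x ∈ H. -/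
open TensorProduct

open LinearMap


section Aux
variable {R : Type*} [CommSemiring R] {M M' N P Q : Type*}
  [AddCommMonoid M] [AddCommMonoid M'] [AddCommMonoid N] [AddCommMonoid P] [AddCommMonoid Q]
  [Module R M] [Module R M'] [Module R N] [Module R P] [Module R Q]

private theorem exists_fin2' (t : M ⊗[R] N) :
    ∃ (n : ℕ) (a : Fin n → M) (b : Fin n → N), t = ∑ i, a i ⊗ₜ[R] b i := by
  induction t with
  | zero => exact ⟨0, Fin.elim0, Fin.elim0, by simp⟩
  | tmul x y => exact ⟨1, fun _ => x, fun _ => y, by simp⟩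
  | add s t hs ht =>
    obtain ⟨n₁, a₁, b₁, h₁⟩ := hs
    obtain ⟨n₂, a₂, b₂, h₂⟩ := ht
    refine ⟨n₁ + n₂, Fin.append a₁ a₂, Fin.append b₁ b₂, ?_⟩
    rw [Fin.sum_univ_add]
    simp [Fin.append_left, Fin.append_right, h₁, h₂]

private theorem exists_fin3' (t : (M ⊗[R] N) ⊗[R] P) :
    ∃ (n : ℕ) (a : Fin n → M) (b : Fin n → N) (c : Fin n → P),
      t = ∑ i, (a i ⊗ₜ[R] b i) ⊗ₜ[R] c i := by
  induction t with
  | zero => exact ⟨0, Fin.elim0, Fin.elim0, Fin.elim0, by simp⟩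
  | tmul x y =>
    obtain ⟨n, a, b, h⟩ := exists_fin2' x
    exact ⟨n, a, b, fun _ => y, by rw [h, sum_tmul]⟩
  | add s t hs ht =>
    obtain ⟨n₁, a₁, b₁, c₁, h₁⟩ := hs
    obtain ⟨n₂, a₂, b₂, c₂, h₂⟩ := ht
    refine ⟨n₁ + n₂, Fin.append a₁ a₂, Fin.append b₁ b₂, Fin.append c₁ c₂, ?_⟩
    rw [Fin.sum_univ_add]
    simp [Fin.append_left, Fin.append_right, h₁, h₂]

private theorem exists_fin4' (t : ((M ⊗[R] N) ⊗[R] P) ⊗[R] Q) :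
    ∃ (n : ℕ) (a : Fin n → M) (b : Fin n → N) (c : Fin n → P) (d : Fin n → Q),
      t = ∑ i, ((a i ⊗ₜ[R] b i) ⊗ₜ[R] c i) ⊗ₜ[R] d i := by
  induction t with
  | zero => exact ⟨0, Fin.elim0, Fin.elim0, Fin.elim0, Fin.elim0, by simp⟩
  | tmul x y =>
    obtain ⟨n, a, b, c, h⟩ := exists_fin3' x
    exact ⟨n, a, b, c, fun _ => y, by rw [h, sum_tmul]⟩
  | add s t hs ht =>
    obtain ⟨n₁, a₁, b₁, c₁, d₁, h₁⟩ := hs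
    obtain ⟨n₂, a₂, b₂, c₂, d₂, h₂⟩ := ht
    refine ⟨n₁ + n₂, Fin.append a₁ a₂, Fin.append b₁ b₂, Fin.append c₁ c₂, Fin.append d₁ d₂, ?_⟩
    rw [Fin.sum_univ_add]
    simp [Fin.append_left, Fin.append_right, h₁, h₂]

private theorem natA (f : M →ₗ[R] M') :
    (LinearMap.lTensor P (f.rTensor N)) ∘ₗ (TensorProduct.assoc R P M N).toLinearMap =
      (TensorProduct.assoc R P M' N).toLinearMap ∘ₗ ((LinearMap.lTensor P f).rTensor N) := by
  apply TensorProduct.ext_threefold; intro p q r; simp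

private theorem natA_apply (f : M →ₗ[R] M') (t : (P ⊗[R] M) ⊗[R] N) :
    (LinearMap.lTensor P (f.rTensor N)) ((TensorProduct.assoc R P M N) t) =
      (TensorProduct.assoc R P M' N) (((LinearMap.lTensor P f).rTensor N) t) := by
  have h := LinearMap.congr_fun (natA f) t
  simpa using h

private theorem natB' (f : M →ₗ[R] M') :
    f.rTensor (N ⊗[R] P) ∘ₗ (TensorProduct.assoc R M N P).toLinearMap =
      (TensorProduct.assoc R M' N P).toLinearMap ∘ₗ (f.rTensor N).rTensor P := by
  apply TensorProduct.ext_threefold; intro p q r; simp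

private theorem natB (f : M →ₗ[R] M') (t : M ⊗[R] (N ⊗[R] P)) :
    (f.rTensor N).rTensor P ((TensorProduct.assoc R M N P).symm t) =
      (TensorProduct.assoc R M' N P).symm (f.rTensor (N ⊗[R] P) t) := by
  apply (TensorProduct.assoc R M' N P).injective
  rw [LinearEquiv.apply_symm_apply]
  have h := LinearMap.congr_fun (natB' (N := N) (P := P) f) ((TensorProduct.assoc R M N P).symm t)
  simp only [LinearMap.coe_comp, Function.comp_apply, LinearEquiv.coe_coe,
    LinearEquiv.apply_symm_apply] at h
  exact h.symm

private theorem slide1 (f : M →ₗ[R] M') (t : N ⊗[R] (M ⊗[R] P)) :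
    f.rTensor (N ⊗[R] P) ((TensorProduct.assoc R M N P)
        (((TensorProduct.comm R N M).toLinearMap.rTensor P)
          ((TensorProduct.assoc R N M P).symm t))) =
      (TensorProduct.assoc R M' N P)
        (((TensorProduct.comm R N M').toLinearMap.rTensor P)
          ((TensorProduct.assoc R N M' P).symm
            (LinearMap.lTensor N (f.rTensor P) t))) := by
  have key : f.rTensor (N ⊗[R] P) ∘ₗ (TensorProduct.assoc R M N P).toLinearMap
        ∘ₗ ((TensorProduct.comm R N M).toLinearMap.rTensor P)
        ∘ₗ (TensorProduct.assoc R N M P).symm.toLinearMap =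
      (TensorProduct.assoc R M' N P).toLinearMap
        ∘ₗ ((TensorProduct.comm R N M').toLinearMap.rTensor P)
        ∘ₗ (TensorProduct.assoc R N M' P).symm.toLinearMap
        ∘ₗ LinearMap.lTensor N (f.rTensor P) := by
    ext a b c; simp
  have h := LinearMap.congr_fun key t
  simpa using h

end Aux

section Defs
variable (k : Type) [Field k] (H : Type) [Ring H] [HopfAlgebra k H]

noncomputable def C3 : H →ₗ[k] ((H ⊗[k] H) ⊗[k] H) ⊗[k] H :=
  TensorProduct.map (TensorProduct.map (Coalgebra.comul (R := k)) LinearMap.id) LinearMap.id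
    ∘ₗ TensorProduct.map (Coalgebra.comul (R := k)) LinearMap.id ∘ₗ Coalgebra.comul

theorem C3_eq : C3 k H =
    (((Coalgebra.comul (R := k) (A := H)).rTensor H).rTensor H)
      ∘ₗ ((Coalgebra.comul (R := k) (A := H)).rTensor H) ∘ₗ Coalgebra.comul := rfl

noncomputable def C4L : H →ₗ[k] (((H ⊗[k] H) ⊗[k] H) ⊗[k] H) ⊗[k] H :=
  (C3 k H).rTensor H ∘ₗ Coalgebra.comul

noncomputable def Phiq :
    (((H ⊗[k] H) ⊗[k] H) ⊗[k] H) ⊗[k] H →ₗ[k] H ⊗[k] (((H ⊗[k] H) ⊗[k] H) ⊗[k] H) :=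
  (TensorProduct.assoc k H ((H ⊗[k] H) ⊗[k] H) H).toLinearMap
    ∘ₗ ((TensorProduct.assoc k H (H ⊗[k] H) H).toLinearMap.rTensor H)
    ∘ₗ (((TensorProduct.assoc k H H H).toLinearMap.rTensor H).rTensor H)

theorem Phiq_tmul (u p q r s : H) :
    Phiq k H ((((u ⊗ₜ[k] p) ⊗ₜ[k] q) ⊗ₜ[k] r) ⊗ₜ[k] s) =
      u ⊗ₜ[k] (((p ⊗ₜ[k] q) ⊗ₜ[k] r) ⊗ₜ[k] s) := by
  simp [Phiq]

/-- The key generalized coassociativity bridge. -/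
theorem QB : LinearMap.lTensor H (C3 k H) ∘ₗ Coalgebra.comul (R := k) = Phiq k H ∘ₗ C4L k H := by
  apply LinearMap.ext; intro y
  simp only [LinearMap.coe_comp, Function.comp_apply]
  set C : H →ₗ[k] H ⊗[k] H := Coalgebra.comul (R := k) with hC
  have e1 : LinearMap.lTensor H (C3 k H) (C y)
      = LinearMap.lTensor H ((C.rTensor H).rTensor H)
          (LinearMap.lTensor H (C.rTensor H) (LinearMap.lTensor H C (C y))) := by
    simp only [C3_eq, ← hC, LinearMap.lTensor_comp, LinearMap.coe_comp, Function.comp_apply]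
  rw [e1]
  rw [show LinearMap.lTensor H C (C y)
      = TensorProduct.assoc k H H H (C.rTensor H (C y)) from (Coalgebra.coassoc_apply y).symm]
  rw [natA_apply (P := H) (N := H) C (C.rTensor H (C y))]
  rw [show ((LinearMap.lTensor H C).rTensor H) (C.rTensor H (C y))
      = ((LinearMap.lTensor H C) ∘ₗ C).rTensor H (C y) by rw [LinearMap.rTensor_comp]; rfl]
  rw [show LinearMap.lTensor H C ∘ₗ C
      = (TensorProduct.assoc k H H H).toLinearMap ∘ₗ C.rTensor H ∘ₗ C from
        (Coalgebra.coassoc (R := k)).symm]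
  rw [show ((TensorProduct.assoc k H H H).toLinearMap ∘ₗ C.rTensor H ∘ₗ C).rTensor H (C y)
      = (TensorProduct.assoc k H H H).toLinearMap.rTensor H
          ((C.rTensor H).rTensor H (C.rTensor H (C y))) by
        simp only [LinearMap.rTensor_comp, LinearMap.coe_comp, Function.comp_apply]]
  rw [natA_apply (P := H) (N := H) (C.rTensor H)
      ((TensorProduct.assoc k H H H).toLinearMap.rTensor H
        ((C.rTensor H).rTensor H (C.rTensor H (C y))))]
  rw [show ((LinearMap.lTensor H (C.rTensor H)).rTensor H)
        ((TensorProduct.assoc k H H H).toLinearMap.rTensor H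
          ((C.rTensor H).rTensor H (C.rTensor H (C y))))
      = ((LinearMap.lTensor H (C.rTensor H) ∘ₗ (TensorProduct.assoc k H H H).toLinearMap).rTensor H)
          ((C.rTensor H).rTensor H (C.rTensor H (C y))) by
        rw [LinearMap.rTensor_comp]; rfl]
  rw [natA (P := H) (N := H) C]
  rw [show (((TensorProduct.assoc k H (H ⊗[k] H) H).toLinearMap ∘ₗ
          (LinearMap.lTensor H C).rTensor H).rTensor H)
        ((C.rTensor H).rTensor H (C.rTensor H (C y)))
      = (TensorProduct.assoc k H (H ⊗[k] H) H).toLinearMap.rTensor H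
          ((((LinearMap.lTensor H C) ∘ₗ C).rTensor H).rTensor H (C.rTensor H (C y))) by
        simp only [LinearMap.rTensor_comp, LinearMap.coe_comp, Function.comp_apply]]
  rw [show LinearMap.lTensor H C ∘ₗ C
      = (TensorProduct.assoc k H H H).toLinearMap ∘ₗ C.rTensor H ∘ₗ C from
        (Coalgebra.coassoc (R := k)).symm]
  rw [show ((((TensorProduct.assoc k H H H).toLinearMap ∘ₗ C.rTensor H ∘ₗ C).rTensor H).rTensor H)
        (C.rTensor H (C y))
      = (((TensorProduct.assoc k H H H).toLinearMap.rTensor H).rTensor H)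
          ((((C.rTensor H).rTensor H).rTensor H)
            (((C.rTensor H).rTensor H) (C.rTensor H (C y)))) by
        simp only [LinearMap.rTensor_comp, LinearMap.coe_comp, Function.comp_apply]]
  show _ = Phiq k H (C4L k H y)
  simp only [Phiq, C4L, C3_eq, ← hC, LinearMap.rTensor_comp, LinearMap.coe_comp,
    Function.comp_apply, LinearEquiv.coe_coe]

noncomputable def tauM (S' : H →ₗ[k] H) : H ⊗[k] H →ₗ[k] H :=
  LinearMap.mul' k H ∘ₗ (TensorProduct.comm k H H).toLinearMap ∘ₗ LinearMap.lTensor H S'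

theorem tauM_tmul (S' : H →ₗ[k] H) (a b : H) : tauM k H S' (a ⊗ₜ[k] b) = S' b * a := by
  simp [tauM]

noncomputable def rhoM : H ⊗[k] H →ₗ[k] H :=
  LinearMap.mul' k H ∘ₗ (HopfAlgebra.antipode (R := k)).rTensor H

theorem rhoM_tmul (a b : H) :
    rhoM k H (a ⊗ₜ[k] b) = HopfAlgebra.antipode (R := k) a * b := by
  simp [rhoM]

theorem rhoM_comul :
    rhoM k H ∘ₗ Coalgebra.comul = Algebra.linearMap k H ∘ₗ Coalgebra.counit := by
  rw [rhoM, LinearMap.comp_assoc]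
  exact HopfAlgebra.mul_antipode_rTensor_comul

noncomputable def ctrM : H ⊗[k] H →ₗ[k] H :=
  (TensorProduct.rid k H).toLinearMap ∘ₗ LinearMap.lTensor H (Coalgebra.counit (R := k))

theorem ctrM_comul : ctrM k H ∘ₗ Coalgebra.comul = LinearMap.id := by
  apply LinearMap.ext; intro y
  simp only [ctrM, LinearMap.coe_comp, Function.comp_apply, LinearEquiv.coe_coe,
    LinearMap.id_coe, id_eq]
  rw [show LinearMap.lTensor H (Coalgebra.counit (R := k)) (Coalgebra.comul y)
      = y ⊗ₜ[k] (1 : k) from Coalgebra.lTensor_counit_comul y]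
  simp

theorem L1 : (Algebra.linearMap k H ∘ₗ Coalgebra.counit (R := k) (A := H)).rTensor H
    ∘ₗ Coalgebra.comul = (TensorProduct.mk k H H) 1 := by
  rw [LinearMap.rTensor_comp, LinearMap.comp_assoc, Coalgebra.rTensor_counit_comp_comul]
  apply LinearMap.ext; intro y
  simp

end Defs

section Defs2
variable {k : Type} [Field k] {H : Type} [Ring H] [HopfAlgebra k H]
  {W : Type} [AddCommGroup W] [Module k W]
  (σ : H →ₐ[k] Module.End k W) (S' : H →ₗ[k] H)
  {m : ℕ} (Z : Fin m → H) (T : Fin m → Module.End k W)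

noncomputable def Dt : H ⊗[k] Module.End k W := ∑ i, Z i ⊗ₜ[k] T i

noncomputable def PhiR : H ⊗[k] H →ₗ[k] H ⊗[k] Module.End k W :=
  LinearMap.lTensor H σ.toLinearMap

theorem PhiR_tmul (a b : H) : PhiR σ (a ⊗ₜ[k] b) = a ⊗ₜ[k] σ b := rfl

noncomputable def Lam2 : H ⊗[k] H →ₗ[k] H ⊗[k] Module.End k W :=
  TensorProduct.map S' (σ.toLinearMap ∘ₗ HopfAlgebra.antipode (R := k))

noncomputable def muD : (H ⊗[k] Module.End k W) ⊗[k] (H ⊗[k] Module.End k W) →ₗ[k]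
    H ⊗[k] Module.End k W :=
  (LinearMap.mul' k _) ∘ₗ (LinearMap.mulRight k (Dt Z T)).rTensor _

noncomputable def rearr : ((H ⊗[k] H) ⊗[k] H) ⊗[k] H →ₗ[k] (H ⊗[k] H) ⊗[k] (H ⊗[k] H) :=
  (TensorProduct.tensorTensorTensorComm k H H H H).toLinearMap
    ∘ₗ ((TensorProduct.comm k H H).toLinearMap.rTensor (H ⊗[k] H))
    ∘ₗ (TensorProduct.assoc k (H ⊗[k] H) H H).toLinearMap

noncomputable def Gam : ((H ⊗[k] H) ⊗[k] H) ⊗[k] H →ₗ[k] H ⊗[k] Module.End k W :=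
  muD Z T ∘ₗ TensorProduct.map (PhiR σ) (Lam2 σ S') ∘ₗ rearr

noncomputable def Psi4 : ((H ⊗[k] H) ⊗[k] H) ⊗[k] H →ₗ[k] H ⊗[k] Module.End k W :=
  muD Z T ∘ₗ TensorProduct.map (PhiR σ) (PhiR σ) ∘ₗ rearr

theorem Gam_tmul (p q r s : H) :
    Gam σ S' Z T (((p ⊗ₜ[k] q) ⊗ₜ[k] r) ⊗ₜ[k] s) =
      ∑ i, (q * Z i * S' p) ⊗ₜ[k] (σ r * T i * σ (HopfAlgebra.antipode (R := k) s)) := by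
  simp only [Gam, muD, rearr, PhiR, Lam2, Dt, LinearMap.coe_comp, Function.comp_apply,
    LinearEquiv.coe_coe, TensorProduct.assoc_tmul, LinearMap.rTensor_tmul,
    TensorProduct.comm_tmul, TensorProduct.tensorTensorTensorComm_tmul,
    TensorProduct.map_tmul, LinearMap.lTensor_tmul, AlgHom.toLinearMap_apply,
    LinearMap.mulRight_apply, LinearMap.mul'_apply, Finset.mul_sum, Finset.sum_mul,
    Algebra.TensorProduct.tmul_mul_tmul]

theorem Psi4_tmul (h c d h' : H) :
    Psi4 σ Z T (((h ⊗ₜ[k] c) ⊗ₜ[k] d) ⊗ₜ[k] h') =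
      ∑ i, (c * Z i * h) ⊗ₜ[k] (σ d * T i * σ h') := by
  simp only [Psi4, muD, rearr, PhiR, Dt, LinearMap.coe_comp, Function.comp_apply,
    LinearEquiv.coe_coe, TensorProduct.assoc_tmul, LinearMap.rTensor_tmul,
    TensorProduct.comm_tmul, TensorProduct.tensorTensorTensorComm_tmul,
    TensorProduct.map_tmul, LinearMap.lTensor_tmul, AlgHom.toLinearMap_apply,
    LinearMap.mulRight_apply, LinearMap.mul'_apply, Finset.mul_sum, Finset.sum_mul,
    Algebra.TensorProduct.tmul_mul_tmul]

theorem tau_comul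
    (hS'left : ∀ (x : H) (n : ℕ) (a b : Fin n → H),
      Coalgebra.comul (R := k) x = ∑ i, a i ⊗ₜ[k] b i →
      ∑ i, S' (b i) * a i = Coalgebra.counit (R := k) x • (1 : H)) :
    tauM k H S' ∘ₗ Coalgebra.comul = Algebra.linearMap k H ∘ₗ Coalgebra.counit := by
  apply LinearMap.ext; intro y
  obtain ⟨n, aa, bb, h⟩ := exists_fin2' (Coalgebra.comul (R := k) y)
  simp only [LinearMap.coe_comp, Function.comp_apply]
  rw [h, map_sum]
  simp only [tauM_tmul]
  rw [hS'left y n aa bb h, Algebra.linearMap_apply, Algebra.algebraMap_eq_smul_one]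

theorem k1
    (hS'left : ∀ (x : H) (n : ℕ) (a b : Fin n → H),
      Coalgebra.comul (R := k) x = ∑ i, a i ⊗ₜ[k] b i →
      ∑ i, S' (b i) * a i = Coalgebra.counit (R := k) x • (1 : H)) :
    ((tauM k H S').rTensor H).rTensor H ∘ₗ C3 k H
      = ((TensorProduct.mk k H H) 1).rTensor H ∘ₗ Coalgebra.comul := by
  rw [C3_eq]
  calc ((tauM k H S').rTensor H).rTensor H
        ∘ₗ ((((Coalgebra.comul (R := k) (A := H)).rTensor H).rTensor H)
          ∘ₗ ((Coalgebra.comul (R := k) (A := H)).rTensor H) ∘ₗ Coalgebra.comul)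
      = (((tauM k H S' ∘ₗ Coalgebra.comul).rTensor H).rTensor H)
          ∘ₗ ((Coalgebra.comul (R := k) (A := H)).rTensor H) ∘ₗ Coalgebra.comul := by
        simp only [← LinearMap.comp_assoc, ← LinearMap.rTensor_comp]
    _ = (((Algebra.linearMap k H ∘ₗ Coalgebra.counit).rTensor H).rTensor H)
          ∘ₗ ((Coalgebra.comul (R := k) (A := H)).rTensor H) ∘ₗ Coalgebra.comul := by
        rw [tau_comul S' hS'left]
    _ = ((((Algebra.linearMap k H ∘ₗ Coalgebra.counit).rTensor H) ∘ₗ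
            (Coalgebra.comul (R := k) (A := H))).rTensor H) ∘ₗ Coalgebra.comul := by
        simp only [← LinearMap.comp_assoc, ← LinearMap.rTensor_comp]
    _ = ((TensorProduct.mk k H H) 1).rTensor H ∘ₗ Coalgebra.comul := by
        rw [L1]

theorem PSIc :
    LinearMap.mul' k (H ⊗[k] Module.End k W)
      ∘ₗ TensorProduct.map (Gam σ S' Z T) (PhiR σ)
      ∘ₗ (TensorProduct.assoc k (((H ⊗[k] H) ⊗[k] H) ⊗[k] H) H H).toLinearMap
      ∘ₗ ((TensorProduct.comm k H (((H ⊗[k] H) ⊗[k] H) ⊗[k] H)).toLinearMap.rTensor H)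
      ∘ₗ ((Phiq k H).rTensor H)
      ∘ₗ (TensorProduct.assoc k (((H ⊗[k] H) ⊗[k] H) ⊗[k] H) H H).symm.toLinearMap
    = Psi4 σ Z T ∘ₗ TensorProduct.map (((tauM k H S').rTensor H).rTensor H) (rhoM k H) := by
  ext a b c d e f
  simp only [TensorProduct.AlgebraTensorModule.curry_apply, TensorProduct.curry_apply,
    LinearMap.coe_restrictScalars, LinearMap.compr₂_apply, TensorProduct.mk_apply,
    LinearMap.coe_comp, Function.comp_apply, LinearEquiv.coe_coe,
    TensorProduct.assoc_symm_tmul, LinearMap.rTensor_tmul, Phiq_tmul,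
    TensorProduct.comm_tmul, TensorProduct.assoc_tmul, TensorProduct.map_tmul,
    Gam_tmul, Psi4_tmul, tauM_tmul, rhoM_tmul, TensorProduct.sum_tmul, map_sum,
    LinearMap.mul'_apply, Algebra.TensorProduct.tmul_mul_tmul, map_mul, mul_assoc,
    PhiR_tmul, Finset.sum_mul, Finset.mul_sum]

theorem I1 :
    LinearMap.mul' k (H ⊗[k] Module.End k W)
      ∘ₗ TensorProduct.map ((Coalgebra.counit (R := k) (A := H)).smulRight (Dt Z T)) (PhiR σ)
      ∘ₗ (TensorProduct.assoc k H H H).toLinearMap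
      ∘ₗ ((TensorProduct.comm k H H).toLinearMap.rTensor H)
    = LinearMap.mulLeft k (Dt Z T) ∘ₗ PhiR σ ∘ₗ (ctrM k H).rTensor H := by
  ext u v w
  simp only [TensorProduct.AlgebraTensorModule.curry_apply, TensorProduct.curry_apply,
    LinearMap.coe_restrictScalars, LinearMap.compr₂_apply, TensorProduct.mk_apply,
    LinearMap.coe_comp, Function.comp_apply, LinearEquiv.coe_coe,
    LinearMap.rTensor_tmul, TensorProduct.comm_tmul, TensorProduct.assoc_tmul,
    TensorProduct.map_tmul, LinearMap.smulRight_apply, PhiR_tmul, ctrM,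
    TensorProduct.rid_tmul, LinearMap.lTensor_tmul, LinearMap.mul'_apply,
    map_smul, LinearMap.map_smul, LinearMap.mulLeft_apply, smul_mul_assoc, mul_smul_comm, ← TensorProduct.smul_tmul']

theorem FIN :
    Psi4 σ Z T ∘ₗ TensorProduct.map (((TensorProduct.mk k H H) 1).rTensor H)
        (Algebra.linearMap k H ∘ₗ Coalgebra.counit (R := k) (A := H))
      = LinearMap.mulRight k (Dt Z T) ∘ₗ PhiR σ
          ∘ₗ ((TensorProduct.rid k (H ⊗[k] H)).toLinearMap
            ∘ₗ LinearMap.lTensor (H ⊗[k] H) (Coalgebra.counit (R := k))) := by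
  ext a b w
  simp only [TensorProduct.AlgebraTensorModule.curry_apply, TensorProduct.curry_apply,
    LinearMap.coe_restrictScalars, LinearMap.compr₂_apply,
    LinearMap.coe_comp, Function.comp_apply, LinearEquiv.coe_coe,
    TensorProduct.map_tmul, TensorProduct.mk_apply, LinearMap.rTensor_tmul,
    Psi4_tmul, Algebra.linearMap_apply, Algebra.algebraMap_eq_smul_one,
    LinearMap.lTensor_tmul, TensorProduct.rid_tmul, PhiR_tmul, map_smul, map_one,
    LinearMap.mulRight_apply, LinearMap.map_smul, Dt, Finset.mul_sum, Finset.sum_mul,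
    Algebra.TensorProduct.tmul_mul_tmul, mul_one, mul_smul_comm, smul_mul_assoc,
    Finset.smul_sum, ← TensorProduct.smul_tmul', TensorProduct.tmul_smul]

end Defs2

/-- Let `H` be a Hopf algebra over a field `k` with antipode `S`, and let
`S' : H →ₗ[k] H` satisfy `Σ S'(x₂)·x₁ = ε(x)·1` and `Σ x₂·S'(x₁) = ε(x)·1`
(an antipode for the co-opposite comultiplication).  Let `(V, π)`, `(W, σ)` be `H`-modules
given by algebra homomorphisms into the endomorphisms.  If a finite family `Z i ∈ H`,
`T i ∈ End W` satisfies the invariance condition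
`Σᵢ (x₂ Zᵢ S'(x₁)) ⊗ (σ(x₃) ∘ Tᵢ ∘ σ(S x₄)) = ε(x) Σᵢ Zᵢ ⊗ Tᵢ`,
then `D = Σᵢ π(Zᵢ) ⊗ Tᵢ` commutes with `Σ π(x₁) ⊗ σ(x₂)` for every `x ∈ H`.
Sweedler decompositions are encoded by quantifying over representations of the (iterated)
comultiplication as finite sums of elementary tensors. -/
theorem dirac_commutes_of_invariant
    {k : Type} [Field k] {H : Type} [Ring H] [HopfAlgebra k H]
    (S' : H →ₗ[k] H)
    (hS'left : ∀ (x : H) (n : ℕ) (a b : Fin n → H),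
      Coalgebra.comul (R := k) x = ∑ i, a i ⊗ₜ[k] b i →
      ∑ i, S' (b i) * a i = Coalgebra.counit (R := k) x • (1 : H))
    (hS'right : ∀ (x : H) (n : ℕ) (a b : Fin n → H),
      Coalgebra.comul (R := k) x = ∑ i, a i ⊗ₜ[k] b i →
      ∑ i, b i * S' (a i) = Coalgebra.counit (R := k) x • (1 : H))
    {V W : Type} [AddCommGroup V] [Module k V] [AddCommGroup W] [Module k W]
    (π : H →ₐ[k] Module.End k V) (σ : H →ₐ[k] Module.End k W)
    (m : ℕ) (Z : Fin m → H) (T : Fin m → Module.End k W)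
    (hinv : ∀ (x : H) (n : ℕ) (a b c d : Fin n → H),
      TensorProduct.map (TensorProduct.map (Coalgebra.comul (R := k)) LinearMap.id) LinearMap.id
          (TensorProduct.map (Coalgebra.comul (R := k)) LinearMap.id
            (Coalgebra.comul (R := k) x)) =
        ∑ i, ((a i ⊗ₜ[k] b i) ⊗ₜ[k] c i) ⊗ₜ[k] d i →
      ∑ i, ∑ j, (b j * Z i * S' (a j)) ⊗ₜ[k]
          (σ (c j) * T i * σ (HopfAlgebra.antipode (R := k) (d j))) =
        Coalgebra.counit (R := k) x • ∑ i, Z i ⊗ₜ[k] T i) :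
    ∀ (x : H) (n : ℕ) (a b : Fin n → H),
      Coalgebra.comul (R := k) x = ∑ j, a j ⊗ₜ[k] b j →
      Commute (∑ i, TensorProduct.map (π (Z i)) (T i))
        (∑ j, TensorProduct.map (π (a j)) (σ (b j))) := by
  intro x n a b hab
  -- invariance in packaged form
  have hG : ∀ y : H, Gam σ S' Z T (C3 k H y)
      = Coalgebra.counit (R := k) y • Dt Z T := by
    intro y
    obtain ⟨n', a', b', c', d', hd⟩ := exists_fin4' (C3 k H y)
    have h0 : TensorProduct.map (TensorProduct.map (Coalgebra.comul (R := k)) LinearMap.id)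
        LinearMap.id (TensorProduct.map (Coalgebra.comul (R := k)) LinearMap.id
          (Coalgebra.comul (R := k) y)) =
        ∑ i, ((a' i ⊗ₜ[k] b' i) ⊗ₜ[k] c' i) ⊗ₜ[k] d' i := hd
    have h1 := hinv y n' a' b' c' d' h0
    rw [hd, map_sum]
    simp only [Gam_tmul]
    rw [Finset.sum_comm, h1]
    rfl
  have hGm : Gam σ S' Z T ∘ₗ C3 k H
      = (Coalgebra.counit (R := k) (A := H)).smulRight (Dt Z T) := by
    apply LinearMap.ext; intro y
    simp only [LinearMap.coe_comp, Function.comp_apply, LinearMap.smulRight_apply]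
    exact hG y
  -- Direction 1 : the central expression equals Dt * PhiR (comul y)
  have D1 : ∀ y : H,
      LinearMap.mul' k (H ⊗[k] Module.End k W)
        (TensorProduct.map (Gam σ S' Z T ∘ₗ C3 k H) (PhiR σ)
          ((TensorProduct.assoc k H H H)
            (((TensorProduct.comm k H H).toLinearMap.rTensor H)
              (((Coalgebra.comul (R := k) (A := H)).rTensor H) (Coalgebra.comul y)))))
      = Dt Z T * PhiR σ (Coalgebra.comul y) := by
    intro y
    rw [hGm]
    have h := LinearMap.congr_fun (I1 σ Z T)
      (((Coalgebra.comul (R := k) (A := H)).rTensor H) (Coalgebra.comul y))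
    simp only [LinearMap.coe_comp, Function.comp_apply, LinearEquiv.coe_coe] at h
    rw [h, ← LinearMap.rTensor_comp_apply, ctrM_comul, LinearMap.rTensor_id]
    simp only [LinearMap.id_coe, id_eq, LinearMap.mulLeft_apply]
  -- Direction 2 : the central expression equals PhiR (comul y) * Dt
  have D2 : ∀ y : H,
      LinearMap.mul' k (H ⊗[k] Module.End k W)
        (TensorProduct.map (Gam σ S' Z T ∘ₗ C3 k H) (PhiR σ)
          ((TensorProduct.assoc k H H H)
            (((TensorProduct.comm k H H).toLinearMap.rTensor H)
              (((Coalgebra.comul (R := k) (A := H)).rTensor H) (Coalgebra.comul y)))))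
      = PhiR σ (Coalgebra.comul y) * Dt Z T := by
    intro y
    have m1 : TensorProduct.map (Gam σ S' Z T ∘ₗ C3 k H) (PhiR σ)
        = TensorProduct.map (Gam σ S' Z T) (PhiR σ) ∘ₗ (C3 k H).rTensor (H ⊗[k] H) := by
      have h := TensorProduct.map_comp (f₂ := Gam σ S' Z T) (f₁ := C3 k H) (g₂ := PhiR σ) (g₁ := LinearMap.id)
      rw [LinearMap.comp_id] at h
      exact h
    rw [m1]
    simp only [LinearMap.coe_comp, Function.comp_apply]
    rw [show ((Coalgebra.comul (R := k) (A := H)).rTensor H) (Coalgebra.comul y)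
        = (TensorProduct.assoc k H H H).symm
            (LinearMap.lTensor H (Coalgebra.comul (R := k)) (Coalgebra.comul y)) from
          (Coalgebra.coassoc_symm_apply y).symm]
    rw [slide1 (C3 k H) (LinearMap.lTensor H (Coalgebra.comul (R := k)) (Coalgebra.comul y))]
    rw [show LinearMap.lTensor H (Coalgebra.comul (R := k) (A := H)) (Coalgebra.comul y)
        = (TensorProduct.assoc k H H H)
            (((Coalgebra.comul (R := k) (A := H)).rTensor H) (Coalgebra.comul y)) from
          (Coalgebra.coassoc_apply y).symm]
    rw [natA_apply (C3 k H)
      (((Coalgebra.comul (R := k) (A := H)).rTensor H) (Coalgebra.comul y))]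
    rw [← LinearMap.rTensor_comp_apply]
    rw [QB k H]
    rw [LinearMap.rTensor_comp_apply]
    have hstep : (C4L k H).rTensor H (Coalgebra.comul y)
        = (TensorProduct.assoc k (((H ⊗[k] H) ⊗[k] H) ⊗[k] H) H H).symm
            ((C3 k H).rTensor (H ⊗[k] H)
              (LinearMap.lTensor H (Coalgebra.comul (R := k)) (Coalgebra.comul y))) := by
      rw [show (C4L k H) = (C3 k H).rTensor H ∘ₗ Coalgebra.comul from rfl]
      rw [LinearMap.rTensor_comp_apply]
      rw [show ((Coalgebra.comul (R := k) (A := H)).rTensor H) (Coalgebra.comul y)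
          = (TensorProduct.assoc k H H H).symm
              (LinearMap.lTensor H (Coalgebra.comul (R := k)) (Coalgebra.comul y)) from
            (Coalgebra.coassoc_symm_apply y).symm]
      exact natB (C3 k H) _
    rw [hstep, LinearEquiv.symm_apply_apply]
    have hpsi := LinearMap.congr_fun (PSIc σ S' Z T)
      ((C3 k H).rTensor (H ⊗[k] H)
        (LinearMap.lTensor H (Coalgebra.comul (R := k)) (Coalgebra.comul y)))
    simp only [LinearMap.coe_comp, Function.comp_apply, LinearEquiv.coe_coe] at hpsi
    rw [hpsi]
    -- merge all comultiplications into the two legs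
    have e : TensorProduct.map (((tauM k H S').rTensor H).rTensor H) (rhoM k H)
          ∘ₗ TensorProduct.map (C3 k H) LinearMap.id
          ∘ₗ TensorProduct.map LinearMap.id (Coalgebra.comul (R := k))
        = TensorProduct.map ((((tauM k H S').rTensor H).rTensor H) ∘ₗ C3 k H)
            (rhoM k H ∘ₗ Coalgebra.comul) := by
      rw [← TensorProduct.map_comp, ← TensorProduct.map_comp]
      simp only [LinearMap.comp_id, LinearMap.id_comp]
    have he := LinearMap.congr_fun e (Coalgebra.comul y)
    simp only [LinearMap.coe_comp, Function.comp_apply] at he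
    rw [show (C3 k H).rTensor (H ⊗[k] H) = TensorProduct.map (C3 k H) LinearMap.id from rfl,
      show LinearMap.lTensor H (Coalgebra.comul (R := k) (A := H))
        = TensorProduct.map LinearMap.id (Coalgebra.comul (R := k)) from rfl, he]
    rw [k1 S' hS'left, rhoM_comul]
    have e3 : TensorProduct.map (((TensorProduct.mk k H H) 1).rTensor H ∘ₗ Coalgebra.comul)
          (Algebra.linearMap k H ∘ₗ Coalgebra.counit (R := k) (A := H))
        = TensorProduct.map (((TensorProduct.mk k H H) 1).rTensor H)
            (Algebra.linearMap k H ∘ₗ Coalgebra.counit (R := k) (A := H))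
          ∘ₗ TensorProduct.map (Coalgebra.comul (R := k)) LinearMap.id := by
      rw [← TensorProduct.map_comp]
      simp only [LinearMap.comp_id]
    rw [e3]
    simp only [LinearMap.coe_comp, Function.comp_apply]
    have hfin := LinearMap.congr_fun (FIN σ Z T)
      (TensorProduct.map (Coalgebra.comul (R := k)) LinearMap.id (Coalgebra.comul y))
    simp only [LinearMap.coe_comp, Function.comp_apply, LinearEquiv.coe_coe] at hfin
    rw [hfin]
    -- final counit collapse
    have hswap : LinearMap.lTensor (H ⊗[k] H) (Coalgebra.counit (R := k) (A := H))
          ∘ₗ (Coalgebra.comul (R := k) (A := H)).rTensor H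
        = (Coalgebra.comul (R := k) (A := H)).rTensor k
          ∘ₗ LinearMap.lTensor H (Coalgebra.counit (R := k)) := by
      rw [LinearMap.lTensor_comp_rTensor, LinearMap.rTensor_comp_lTensor]
    have hsw := LinearMap.congr_fun hswap (Coalgebra.comul y)
    simp only [LinearMap.coe_comp, Function.comp_apply] at hsw
    rw [show TensorProduct.map (Coalgebra.comul (R := k) (A := H)) LinearMap.id
        = (Coalgebra.comul (R := k) (A := H)).rTensor H from rfl, hsw]
    rw [show LinearMap.lTensor H (Coalgebra.counit (R := k) (A := H)) (Coalgebra.comul y)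
        = y ⊗ₜ[k] (1 : k) from Coalgebra.lTensor_counit_comul y]
    simp only [LinearMap.rTensor_tmul, TensorProduct.rid_tmul, one_smul,
      LinearMap.mulRight_apply]
  -- combine
  have hmain : Dt Z T * PhiR σ (Coalgebra.comul x)
      = PhiR σ (Coalgebra.comul x) * Dt Z T := (D1 x).symm.trans (D2 x)
  have hR : PhiR σ (Coalgebra.comul (R := k) x) = ∑ j, a j ⊗ₜ[k] σ (b j) := by
    rw [hab, map_sum]
    simp only [PhiR_tmul]
  rw [hR] at hmain
  -- push through the representation algebra morphism
  have hcomm : Commute (Dt Z T) (∑ j, a j ⊗ₜ[k] σ (b j)) := hmain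
  have h2 := hcomm.map
    ((Module.endTensorEndAlgHom (R := k) (S := k) (A := k) (M := V) (N := W)).comp
      (Algebra.TensorProduct.map π (AlgHom.id k (Module.End k W))))
  have hATM : ∀ (f : Module.End k V) (g : Module.End k W),
      (Module.endTensorEndAlgHom (R := k) (S := k) (A := k) (M := V) (N := W)) (f ⊗ₜ[k] g)
        = TensorProduct.map f g := by
    intro f g
    rfl
  have hθD : ((Module.endTensorEndAlgHom (R := k) (S := k) (A := k) (M := V) (N := W)).comp
      (Algebra.TensorProduct.map π (AlgHom.id k (Module.End k W)))) (Dt Z T)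
      = ∑ i, TensorProduct.map (π (Z i)) (T i) := by
    rw [show Dt Z T = ∑ i, Z i ⊗ₜ[k] T i from rfl, map_sum]
    apply Finset.sum_congr rfl
    intro i _
    simp only [AlgHom.coe_comp, Function.comp_apply, Algebra.TensorProduct.map_tmul,
      AlgHom.coe_id, id_eq]
    exact hATM (π (Z i)) (T i)
  have hθR : ((Module.endTensorEndAlgHom (R := k) (S := k) (A := k) (M := V) (N := W)).comp
      (Algebra.TensorProduct.map π (AlgHom.id k (Module.End k W)))) (∑ j, a j ⊗ₜ[k] σ (b j))
      = ∑ j, TensorProduct.map (π (a j)) (σ (b j)) := by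
    rw [map_sum]
    apply Finset.sum_congr rfl
    intro j _
    simp only [AlgHom.coe_comp, Function.comp_apply, Algebra.TensorProduct.map_tmul,
      AlgHom.coe_id, id_eq]
    exact hATM (π (a j)) (σ (b j))
  rw [hθD, hθR] at h2
  exact h2
end

section
/- Let q be a real number with q > 0 and q ≠ 1, let [n] = (qⁿ − q⁻ⁿ)/(q − q⁻¹) denote the q-integers, and fix natural numbers k and m. Then the series Σ_{n=0}^∞ n^m · | [n+k]/√(1 + [n+k]²) − [n]/√(1 + [n]²) | converges, i.e. the sequence a_n = [n+k]/√(1+[n+k]²) − [n]/√(1+[n]²) decays rapidly. (This is the estimate showing that the commutators [F, X(k)] of the sign operator F = D(1+D²)^{−1/2} with the shift-by-k blocks of the GNS representation of ℂ[SU_q(2)] are trace class.) -/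
/-- The `q`-integer `[n] = (qⁿ − q⁻ⁿ)/(q − q⁻¹)`. -/
noncomputable def qInt (q : ℝ) (n : ℕ) : ℝ := (q ^ n - q⁻¹ ^ n) / (q - q⁻¹)

lemma qInt_inv (q : ℝ) (n : ℕ) : qInt q⁻¹ n = qInt q n := by
  simp only [qInt, inv_inv]
  rw [← neg_div_neg_eq]
  ring_nf

lemma qInt_nonneg {q : ℝ} (hq : 1 < q) (n : ℕ) : 0 ≤ qInt q n := by
  have hq0 : 0 < q := lt_trans one_pos hq
  have h1 : q⁻¹ < 1 := inv_lt_one_of_one_lt₀ hq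
  have hd : 0 < q - q⁻¹ := by linarith
  apply div_nonneg _ hd.le
  have : q⁻¹ ^ n ≤ q ^ n := pow_le_pow_left₀ (by positivity) (by linarith) n
  linarith

lemma qInt_ge {q : ℝ} (hq : 1 < q) (j : ℕ) : q ^ j ≤ qInt q (j + 1) := by
  have hq0 : 0 < q := lt_trans one_pos hq
  have h1 : q⁻¹ < 1 := inv_lt_one_of_one_lt₀ hq
  have hd : 0 < q - q⁻¹ := by linarith
  rw [qInt, le_div_iff₀ hd]
  have hle : q⁻¹ ^ (j + 1) ≤ q ^ j * q⁻¹ := by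
    rw [pow_succ]
    have : q⁻¹ ^ j ≤ q ^ j := pow_le_pow_left₀ (by positivity) (by linarith) j
    have : 0 < q⁻¹ := by positivity
    nlinarith [pow_le_pow_left₀ (show (0:ℝ) ≤ q⁻¹ by positivity) (show q⁻¹ ≤ q by linarith) j]
  have : q ^ j * (q - q⁻¹) = q ^ (j+1) - q ^ j * q⁻¹ := by ring
  rw [this]
  linarith

-- f(x) = x/√(1+x²) lies in [0,1] for x ≥ 0
lemma f_nonneg {x : ℝ} (hx : 0 ≤ x) : 0 ≤ x / Real.sqrt (1 + x ^ 2) := by positivity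

lemma f_le_one {x : ℝ} (hx : 0 ≤ x) : x / Real.sqrt (1 + x ^ 2) ≤ 1 := by
  have hs : 0 < Real.sqrt (1 + x ^ 2) := Real.sqrt_pos.mpr (by positivity)
  rw [div_le_one hs]
  have : x = Real.sqrt (x ^ 2) := (Real.sqrt_sq hx).symm
  rw [this]
  exact Real.sqrt_le_sqrt (by nlinarith)

lemma one_sub_f_le {x : ℝ} (hx : 0 ≤ x) :
    1 - x / Real.sqrt (1 + x ^ 2) ≤ 1 / (1 + x ^ 2) := by
  set s := Real.sqrt (1 + x ^ 2) with hs_def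
  have hs : 0 < s := Real.sqrt_pos.mpr (by positivity)
  have hs2 : s ^ 2 = 1 + x ^ 2 := Real.sq_sqrt (by positivity)
  have hxs : x ≤ s := by
    have : x = Real.sqrt (x ^ 2) := (Real.sqrt_sq hx).symm
    rw [this]; exact Real.sqrt_le_sqrt (by nlinarith)
  rw [le_div_iff₀ (show (0:ℝ) < 1 + x ^ 2 by positivity)]
  have hxdiv : x / s * s ^ 2 = x * s := by field_simp
  nlinarith [mul_nonneg hx (sub_nonneg.mpr hxs)]

-- key decay: for q > 1, 1 - f([n]) ≤ q² (q⁻²)ⁿ, all n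
lemma one_sub_f_qInt_le {q : ℝ} (hq : 1 < q) (n : ℕ) :
    1 - qInt q n / Real.sqrt (1 + qInt q n ^ 2) ≤ q ^ 2 * (q⁻¹ ^ 2) ^ n := by
  have hq0 : 0 < q := lt_trans one_pos hq
  obtain _ | j := n
  · have h0 : qInt q 0 = 0 := by simp [qInt]
    have h1 : 1 - qInt q 0 / Real.sqrt (1 + qInt q 0 ^ 2) = 1 := by rw [h0]; simp
    rw [h1, pow_zero, mul_one]
    nlinarith
  · calc 1 - qInt q (j+1) / Real.sqrt (1 + qInt q (j+1) ^ 2)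
        ≤ 1 / (1 + qInt q (j+1) ^ 2) := one_sub_f_le (qInt_nonneg hq _)
      _ ≤ q ^ 2 * (q⁻¹ ^ 2) ^ (j+1) := by
          have hge : q ^ j ≤ qInt q (j+1) := qInt_ge hq j
          have hpos : (0:ℝ) < q ^ j := by positivity
          have h2 : (q ^ j) ^ 2 ≤ 1 + qInt q (j+1) ^ 2 := by nlinarith
          have hpos2 : (0:ℝ) < (q ^ j) ^ 2 := by positivity
          calc 1 / (1 + qInt q (j+1) ^ 2) ≤ 1 / (q ^ j) ^ 2 :=
                one_div_le_one_div_of_le hpos2 h2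
            _ = q ^ 2 * (q⁻¹ ^ 2) ^ (j+1) := by
                field_simp
                rw [div_pow, one_pow]
                field_simp
                ring

lemma main_gt_one {q : ℝ} (hq : 1 < q) (k m : ℕ) :
    Summable (fun n : ℕ =>
      (n : ℝ) ^ m *
        |qInt q (n + k) / Real.sqrt (1 + qInt q (n + k) ^ 2) -
          qInt q n / Real.sqrt (1 + qInt q n ^ 2)|) := by
  have hq0 : 0 < q := lt_trans one_pos hq
  have hr : ‖q⁻¹ ^ 2‖ < 1 := by
    rw [Real.norm_eq_abs, abs_of_nonneg (by positivity)]
    have : q⁻¹ < 1 := inv_lt_one_of_one_lt₀ hq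
    nlinarith [inv_pos.mpr hq0]
  have hsum : Summable (fun n : ℕ => 2 * q ^ 2 * ((n : ℝ) ^ m * (q⁻¹ ^ 2) ^ n)) :=
    (summable_pow_mul_geometric_of_norm_lt_one m hr).mul_left _
  apply Summable.of_nonneg_of_le (fun n => by positivity) _ hsum
  intro n
  set a := qInt q n with ha
  set b := qInt q (n + k) with hb
  have hfa0 : 0 ≤ a / Real.sqrt (1 + a ^ 2) := f_nonneg (qInt_nonneg hq n)
  have hfb0 : 0 ≤ b / Real.sqrt (1 + b ^ 2) := f_nonneg (qInt_nonneg hq _)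
  have hfa1 : a / Real.sqrt (1 + a ^ 2) ≤ 1 := f_le_one (qInt_nonneg hq n)
  have hfb1 : b / Real.sqrt (1 + b ^ 2) ≤ 1 := f_le_one (qInt_nonneg hq _)
  have habs : |b / Real.sqrt (1 + b ^ 2) - a / Real.sqrt (1 + a ^ 2)| ≤
      (1 - b / Real.sqrt (1 + b ^ 2)) + (1 - a / Real.sqrt (1 + a ^ 2)) := by
    rw [abs_le]; constructor <;> linarith
  have hdecayA : 1 - a / Real.sqrt (1 + a ^ 2) ≤ q ^ 2 * (q⁻¹ ^ 2) ^ n :=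
    one_sub_f_qInt_le hq n
  have hdecayB : 1 - b / Real.sqrt (1 + b ^ 2) ≤ q ^ 2 * (q⁻¹ ^ 2) ^ n := by
    refine (one_sub_f_qInt_le hq (n + k)).trans ?_
    have hr0 : (0:ℝ) ≤ q⁻¹ ^ 2 := by positivity
    have hr1 : q⁻¹ ^ 2 ≤ 1 := by
      have : q⁻¹ ≤ 1 := (inv_lt_one_of_one_lt₀ hq).le
      nlinarith [inv_pos.mpr hq0]
    have : (q⁻¹ ^ 2) ^ (n + k) ≤ (q⁻¹ ^ 2) ^ n :=
      pow_le_pow_of_le_one hr0 hr1 (Nat.le_add_right n k)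
    nlinarith
  have hbnd : |b / Real.sqrt (1 + b ^ 2) - a / Real.sqrt (1 + a ^ 2)| ≤
      2 * q ^ 2 * (q⁻¹ ^ 2) ^ n := by linarith
  calc (n : ℝ) ^ m * |b / Real.sqrt (1 + b ^ 2) - a / Real.sqrt (1 + a ^ 2)|
      ≤ (n : ℝ) ^ m * (2 * q ^ 2 * (q⁻¹ ^ 2) ^ n) := by
        apply mul_le_mul_of_nonneg_left hbnd (by positivity)
    _ = 2 * q ^ 2 * ((n : ℝ) ^ m * (q⁻¹ ^ 2) ^ n) := by ring


/-- For real `q > 0`, `q ≠ 1` and fixed naturals `k`, `m`, the series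
`Σ_n n^m · | [n+k]/√(1+[n+k]²) − [n]/√(1+[n]²) |` converges; i.e. the sequence
`a_n = [n+k]/√(1+[n+k]²) − [n]/√(1+[n]²)` decays rapidly.  This is the estimate showing
that the commutators `[F, X(k)]` of the sign operator `F = D(1+D²)^{-1/2}` with the
shift-by-`k` blocks of the GNS representation of `ℂ[SU_q(2)]` are trace class. -/
theorem sign_operator_commutator_summable (q : ℝ) (hq : 0 < q) (hq1 : q ≠ 1) (k m : ℕ) :
    Summable (fun n : ℕ =>
      (n : ℝ) ^ m *
        |qInt q (n + k) / Real.sqrt (1 + qInt q (n + k) ^ 2) -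
          qInt q n / Real.sqrt (1 + qInt q n ^ 2)|) := by
  rcases lt_or_gt_of_ne hq1 with h | h
  · have hinv : 1 < q⁻¹ := (one_lt_inv₀ hq).mpr h
    simpa [qInt_inv] using main_gt_one hinv k m
  · exact main_gt_one h k m
end
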